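/- Let f : ℤ_p → ℤ_p be 1-Lipschitz. If f preserves the Haar measure μ_p (i.e., μ_p(f⁻¹(A)) = μ_p(A) for all Borel A), then f is surjective. -/
import Mathlib

theorem stmt5 (p : ℕ) [Fact p.Prime] [MeasurableSpace ℤ_[p]] [BorelSpace ℤ_[p]]
    (μ : MeasureTheory.Measure ℤ_[p]) [MeasureTheory.IsProbabilityMeasure μ]
    (hinv : ∀ (a : ℤ_[p]) (A : Set ℤ_[p]), MeasurableSet A → μ ((fun x => a + x) ⁻¹' A) = μ A)
    (f : ℤ_[p] → ℤ_[p])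
    (hlip : ∀ x y : ℤ_[p], ‖f y - f x‖ ≤ ‖y - x‖)
    (hpres : ∀ A : Set ℤ_[p], MeasurableSet A → μ (f ⁻¹' A) = μ A) :
    Function.Surjective f := by
  have hcont : Continuous f := by
    refine (LipschitzWith.of_dist_le_mul (K := 1) ?_).continuous
    intro x y
    simpa [dist_eq_norm, one_mul] using hlip y x
  intro y
  by_contra hy
  have hyr : y ∉ Set.range f := by
    rintro ⟨a, rfl⟩; exact hy ⟨a, rfl⟩
  have hopen : IsOpen (Set.range f)ᶜ := (isCompact_range hcont).isClosed.isOpen_compl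
  obtain ⟨ε, hε, hsub⟩ := Metric.isOpen_iff.mp hopen y hyr
  -- preimage of the ball is empty
  have hpre : f ⁻¹' (Metric.ball y ε) = ∅ := by
    ext x
    simp only [Set.mem_preimage, Set.mem_empty_iff_false, iff_false]
    intro hx
    exact hsub hx ⟨x, rfl⟩
  have h0 : μ (Metric.ball y ε) = 0 := by
    rw [← hpres _ measurableSet_ball, hpre, MeasureTheory.measure_empty]
  -- all balls of radius ε have the same measure
  have hball_eq : ∀ z : ℤ_[p], μ (Metric.ball z ε) = μ (Metric.ball y ε) := by
    intro z
    have := hinv (y - z) (Metric.ball y ε) measurableSet_ball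
    have heq : (fun x => y - z + x) ⁻¹' Metric.ball y ε = Metric.ball z ε := by
      ext x
      simp only [Set.mem_preimage, Metric.mem_ball, dist_eq_norm]
      constructor <;> intro h <;> [skip; skip] <;>
        · convert h using 2; ring
    rw [← heq, this]
  -- cover ℤ_p by balls around naturals
  have hcover : (Set.univ : Set ℤ_[p]) ⊆ ⋃ k : ℕ, Metric.ball (k : ℤ_[p]) ε := by
    intro x _
    obtain ⟨k, hk⟩ := PadicInt.denseRange_natCast.exists_dist_lt x hε
    exact Set.mem_iUnion.2 ⟨k, by simpa [Metric.mem_ball] using hk⟩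
  have h1 : (μ Set.univ : ENNReal) ≤ 0 := by
    calc μ Set.univ ≤ μ (⋃ k : ℕ, Metric.ball (k : ℤ_[p]) ε) :=
          MeasureTheory.measure_mono hcover
      _ ≤ ∑' k : ℕ, μ (Metric.ball (k : ℤ_[p]) ε) := MeasureTheory.measure_iUnion_le _
      _ = 0 := by simp [hball_eq, h0]
  simp [MeasureTheory.measure_univ] at h1
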